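/- Assume additionally that O_t(o|s) > 0 for every t ∈ {2,…,H+1}, o ∈ O, s ∈ S. For h ∈ {1,…,H+1} and an observable history f_h, define V*_h(f_h) := max over all deterministic policies π of V^π_h(f_h) (a maximum over a finite set). Then the Bellman optimality equations hold: V*_{H+1}(f_{H+1}) = (1/γ)·ln ∑_{s∈S} σ_{H+1}(s; f_{H+1}) for every f_{H+1}, and for every h ∈ {1,…,H} and every observable history f_h, V*_h(f_h) = max_{a∈A} (1/γ)·ln ∑_{o∈O} O'(o)·exp(γ·V*_{h+1}(f_h, a, o)). In particular, a greedy deterministic history-dependent policy attains the globally optimal value. -/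

import Mathlib

open Finset

noncomputable section

variable {S O A : Type*}

/-- Truncation of a sequence: keep the first `n` values, fill the rest with junk. -/
def truncSeq {X : Type*} [Nonempty X] (f : ℕ → X) (n : ℕ) : ℕ → X :=
  fun t => if t < n then f t else Classical.arbitrary X

/-- Action sequence generated by a policy `π` from observations `obs`, keeping the
prescribed actions `acts` at indices `< n₀`.  At step `n`, the policy only sees the
actions at indices `< n` and the observations at indices `< n`. -/
def genAct [Nonempty A] [Nonempty O] (π : ℕ → (ℕ → A) → (ℕ → O) → A)
    (acts : ℕ → A) (obs : ℕ → O) (n₀ : ℕ) : ℕ → A :=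
  fun n => Nat.strongRecOn n (fun n ih =>
    if n < n₀ then acts n
    else π n (fun t => if ht : t < n then ih t ht else Classical.arbitrary A)
             (fun t => if t < n then obs t else Classical.arbitrary O))

/-- The action chosen by the policy `π` at step `m` given the observable history
recorded in `acts` (indices `< m`) and `obs` (indices `< m`). -/
def polAct [Nonempty A] [Nonempty O] (π : ℕ → (ℕ → A) → (ℕ → O) → A)
    (acts : ℕ → A) (obs : ℕ → O) (m : ℕ) : A :=
  π m (truncSeq acts m) (truncSeq obs m)

/-- Splicing a tail of `k` observations after the first `m` observations of `obs`. -/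
def splice [Nonempty O] (obs : ℕ → O) (m : ℕ) {k : ℕ} (tail : Fin k → O) : ℕ → O :=
  fun t => if t < m then obs t
    else if h : t - m < k then tail ⟨t - m, h⟩ else Classical.arbitrary O

/-- The (unnormalized) risk belief `σ_{n+1}(s; f_{n+1})` (paper index `h = n+1`). -/
def riskBelief [Fintype S] (μ : S → ℝ) (Ttr : ℕ → A → S → S → ℝ)
    (Oem : ℕ → O → S → ℝ) (Oref : O → ℝ) (rew : ℕ → S → A → ℝ) (γ : ℝ)
    (n : ℕ) (acts : ℕ → A) (obs : ℕ → O) (s : S) : ℝ :=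
  ∑ p : Fin n → S,
    let q : Fin (n + 1) → S := Fin.snoc p s
    (μ (q 0) * ∏ t : Fin n, Ttr t (acts t) (q t.castSucc) (q t.succ)) *
      ((∏ t : Fin n, (Oem t (obs t) (q t.succ) / Oref (obs t))) *
        Real.exp (γ * ∑ t : Fin n, rew t (q t.castSucc) (acts t)))

/-- The raw value `∑_{o_{h+1:H+1}} (∏ O'(o_t)) ∑_s σ_{H+1}(s; f_{H+1})` at
step `h = m + 1`; the value function is `V^π_h(f_h) = (1/γ)·ln` of this quantity. -/
def valueRaw [Fintype S] [Fintype O] [Nonempty A] [Nonempty O]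
    (μ : S → ℝ) (Ttr : ℕ → A → S → S → ℝ) (Oem : ℕ → O → S → ℝ) (Oref : O → ℝ)
    (rew : ℕ → S → A → ℝ) (γ : ℝ) (H : ℕ)
    (π : ℕ → (ℕ → A) → (ℕ → O) → A)
    (m : ℕ) (acts : ℕ → A) (obs : ℕ → O) : ℝ :=
  ∑ tail : Fin (H - m) → O,
    (∏ j, Oref (tail j)) *
      ∑ s : S, riskBelief μ Ttr Oem Oref rew γ H
        (genAct π acts (splice obs m tail) m) (splice obs m tail) s

-- my lemmas
lemma genAct_eq [Nonempty A] [Nonempty O] (π : ℕ → (ℕ → A) → (ℕ → O) → A)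
    (acts : ℕ → A) (obs : ℕ → O) (n₀ n : ℕ) :
    genAct π acts obs n₀ n =
      if n < n₀ then acts n
      else π n (fun t => if ht : t < n then genAct π acts obs n₀ t else Classical.arbitrary A)
               (fun t => if t < n then obs t else Classical.arbitrary O) :=
  Nat.strongRecOn_eq _ n

lemma genAct_lt [Nonempty A] [Nonempty O] (π : ℕ → (ℕ → A) → (ℕ → O) → A)
    (acts : ℕ → A) (obs : ℕ → O) {n₀ n : ℕ} (h : n < n₀) :
    genAct π acts obs n₀ n = acts n := by
  rw [genAct_eq, if_pos h]

lemma genAct_step [Nonempty A] [Nonempty O] (π : ℕ → (ℕ → A) → (ℕ → O) → A)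
    (acts : ℕ → A) (obs : ℕ → O) (m : ℕ) :
    genAct π acts obs m = genAct π (Function.update acts m (polAct π acts obs m)) obs (m + 1) := by
  funext n
  induction n using Nat.strongRecOn with
  | ind n ih =>
    rw [genAct_eq, genAct_eq]
    rcases lt_trichotomy n m with h | h | h
    · rw [if_pos h, if_pos (by omega), Function.update_of_ne h.ne]
    · subst h
      rw [if_neg (lt_irrefl n), if_pos (Nat.lt_succ_self n), Function.update_self]
      show _ = polAct π acts obs n
      unfold polAct truncSeq
      congr 1
      funext t
      by_cases ht : t < n
      · rw [dif_pos ht, if_pos ht, genAct_lt _ _ _ ht]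
      · rw [dif_neg ht, if_neg ht]
    · rw [if_neg (by omega), if_neg (by omega)]
      congr 1
      funext t
      by_cases ht : t < n
      · rw [dif_pos ht, dif_pos ht, ih t ht]
      · rw [dif_neg ht, dif_neg ht]

lemma splice_lt [Nonempty O] (obs : ℕ → O) (m : ℕ) {k : ℕ} (tail : Fin k → O)
    {t : ℕ} (h : t < m) : splice obs m tail t = obs t := by
  simp [splice, h]

lemma splice_cons [Nonempty O] (obs : ℕ → O) (m k : ℕ) (o : O) (tail : Fin k → O) :
    splice obs m (Fin.cons o tail : Fin (k + 1) → O) =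
      splice (Function.update obs m o) (m + 1) tail := by
  funext t
  unfold splice
  rcases lt_trichotomy t m with h | h | h
  · rw [if_pos h, if_pos (by omega), Function.update_of_ne h.ne]
  · subst h
    rw [if_neg (lt_irrefl t), if_pos (Nat.lt_succ_self t), Function.update_self,
      dif_pos (show t - t < k + 1 by omega)]
    have : (⟨t - t, by omega⟩ : Fin (k + 1)) = 0 := by ext; simp
    rw [this, Fin.cons_zero]
  · rw [if_neg (by omega), if_neg (by omega)]
    by_cases h3 : t - m < k + 1
    · have h4 : t - (m + 1) < k := by omega
      rw [dif_pos h3, dif_pos h4]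
      have : (⟨t - m, h3⟩ : Fin (k + 1)) = Fin.succ ⟨t - (m + 1), h4⟩ := by
        ext; simp; omega
      rw [this, Fin.cons_succ]
    · rw [dif_neg h3, dif_neg (by omega)]


section Aux

variable [Fintype S] [Fintype O] [Fintype A] [Nonempty S] [Nonempty O] [Nonempty A]
variable (μ : S → ℝ) (Ttr : ℕ → A → S → S → ℝ) (Oem : ℕ → O → S → ℝ) (Oref : O → ℝ)
    (rew : ℕ → S → A → ℝ) (γ : ℝ)

lemma riskBelief_congr {n : ℕ} {acts acts' : ℕ → A} {obs obs' : ℕ → O} (s : S)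
    (ha : ∀ t < n, acts t = acts' t) (ho : ∀ t < n, obs t = obs' t) :
    riskBelief μ Ttr Oem Oref rew γ n acts obs s =
      riskBelief μ Ttr Oem Oref rew γ n acts' obs' s := by
  unfold riskBelief
  refine Finset.sum_congr rfl fun p _ => ?_
  simp only
  congr 1
  · congr 1
    exact Finset.prod_congr rfl fun t _ => by rw [ha t t.isLt]
  · congr 1
    · exact Finset.prod_congr rfl fun t _ => by rw [ho t t.isLt]
    · congr 2
      exact Finset.sum_congr rfl fun t _ => by rw [ha t t.isLt]

lemma valueRaw_at_H (H : ℕ) (π : ℕ → (ℕ → A) → (ℕ → O) → A) (acts : ℕ → A) (obs : ℕ → O) :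
    valueRaw μ Ttr Oem Oref rew γ H π H acts obs =
      ∑ s : S, riskBelief μ Ttr Oem Oref rew γ H acts obs s := by
  unfold valueRaw
  haveI : IsEmpty (Fin (H - H)) := by rw [Nat.sub_self]; infer_instance
  letI : Unique (Fin (H - H) → O) := Pi.uniqueOfIsEmpty _
  rw [Fintype.sum_unique]
  rw [Finset.univ_eq_empty, Finset.prod_empty, one_mul]
  refine Finset.sum_congr rfl fun s _ => ?_
  exact riskBelief_congr μ Ttr Oem Oref rew γ s
    (fun t ht => genAct_lt _ _ _ ht) (fun t ht => splice_lt _ _ _ ht)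

lemma sum_riskBelief_pos {H : ℕ}
    (hμ0 : ∀ s, 0 ≤ μ s) (hμ1 : ∑ s, μ s = 1)
    (hT0 : ∀ h, h < H → ∀ a s s', 0 ≤ Ttr h a s s')
    (hT1 : ∀ h, h < H → ∀ a s, ∑ s', Ttr h a s s' = 1)
    (hO0 : ∀ t, t < H → ∀ o s, 0 < Oem t o s)
    (hOref0 : ∀ o, 0 < Oref o)
    (acts : ℕ → A) (obs : ℕ → O) :
    0 < ∑ s : S, riskBelief μ Ttr Oem Oref rew γ H acts obs s := by
  -- each summand is nonnegative
  have hterm : ∀ (s : S) (p : Fin H → S),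
      0 ≤ (let q : Fin (H + 1) → S := Fin.snoc p s
        (μ (q 0) * ∏ t : Fin H, Ttr t (acts t) (q t.castSucc) (q t.succ)) *
          ((∏ t : Fin H, (Oem t (obs t) (q t.succ) / Oref (obs t))) *
            Real.exp (γ * ∑ t : Fin H, rew t (q t.castSucc) (acts t)))) := by
    intro s p
    refine mul_nonneg (mul_nonneg (hμ0 _) (Finset.prod_nonneg fun t _ =>
      hT0 t t.isLt _ _ _)) (mul_nonneg (Finset.prod_nonneg fun t _ =>
      (div_nonneg (hO0 t t.isLt _ _).le (hOref0 _).le)) (Real.exp_pos _).le)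
  -- a positive trajectory
  have hs0 : ∃ s, 0 < μ s := by
    by_contra h
    push_neg at h
    have : ∑ s, μ s = 0 := Finset.sum_eq_zero fun s _ => le_antisymm (h s) (hμ0 s)
    rw [hμ1] at this; norm_num at this
  have hstep : ∀ t, t < H → ∀ s, ∃ s', 0 < Ttr t (acts t) s s' := by
    intro t ht s
    by_contra h
    push_neg at h
    have : ∑ s', Ttr t (acts t) s s' = 0 :=
      Finset.sum_eq_zero fun s' _ => le_antisymm (h s') (hT0 t ht _ _ _)
    rw [hT1 t ht] at this; norm_num at this
  set q : ℕ → S := fun t => Nat.rec hs0.choose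
    (fun t qt => if ht : t < H then (hstep t ht qt).choose else Classical.arbitrary S) t with hq
  have hq0 : 0 < μ (q 0) := hs0.choose_spec
  have hqs : ∀ t, t < H → 0 < Ttr t (acts t) (q t) (q (t + 1)) := by
    intro t ht
    have : q (t + 1) = (hstep t ht (q t)).choose := by
      rw [hq]; simp only; rw [dif_pos ht]
    rw [this]
    exact (hstep t ht (q t)).choose_spec
  have hsnoc : (Fin.snoc (fun i : Fin H => q i) (q H) : Fin (H + 1) → S) =
      fun i : Fin (H + 1) => q i := by
    funext i
    induction i using Fin.lastCases with
    | last => simp [Fin.snoc_last]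
    | cast j => simp [Fin.snoc_castSucc]
  have hpos : ∀ s : S, 0 ≤ riskBelief μ Ttr Oem Oref rew γ H acts obs s := by
    intro s
    exact Finset.sum_nonneg fun p _ => hterm s p
  refine Finset.sum_pos' (fun s _ => hpos s) ⟨q H, Finset.mem_univ _, ?_⟩
  unfold riskBelief
  refine Finset.sum_pos' (fun p _ => hterm (q H) p) ⟨fun i : Fin H => q i, Finset.mem_univ _, ?_⟩
  simp only [hsnoc]
  refine mul_pos (mul_pos hq0 (Finset.prod_pos fun t _ => ?_))
    (mul_pos (Finset.prod_pos fun t _ => div_pos (hO0 t t.isLt _ _) (hOref0 _))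
      (Real.exp_pos _))
  have h1 : ((t.castSucc : Fin (H + 1)) : ℕ) = (t : ℕ) := rfl
  have h2 : ((t.succ : Fin (H + 1)) : ℕ) = (t : ℕ) + 1 := rfl
  rw [h1, h2]
  exact hqs t t.isLt

lemma valueRaw_pos {H : ℕ}
    (hμ0 : ∀ s, 0 ≤ μ s) (hμ1 : ∑ s, μ s = 1)
    (hT0 : ∀ h, h < H → ∀ a s s', 0 ≤ Ttr h a s s')
    (hT1 : ∀ h, h < H → ∀ a s, ∑ s', Ttr h a s s' = 1)
    (hO0 : ∀ t, t < H → ∀ o s, 0 < Oem t o s)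
    (hOref0 : ∀ o, 0 < Oref o)
    (π : ℕ → (ℕ → A) → (ℕ → O) → A) (m : ℕ) (acts : ℕ → A) (obs : ℕ → O) :
    0 < valueRaw μ Ttr Oem Oref rew γ H π m acts obs := by
  unfold valueRaw
  refine Finset.sum_pos (fun tail _ => ?_) Finset.univ_nonempty
  exact mul_pos (Finset.prod_pos fun j _ => hOref0 _)
    (sum_riskBelief_pos μ Ttr Oem Oref rew γ hμ0 hμ1 hT0 hT1 hO0 hOref0 _ _)

lemma truncSeq_congr {X : Type*} [Nonempty X] {f g : ℕ → X} {n : ℕ}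
    (h : ∀ t < n, f t = g t) : truncSeq f n = truncSeq g n := by
  funext t
  unfold truncSeq
  by_cases ht : t < n
  · rw [if_pos ht, if_pos ht, h t ht]
  · rw [if_neg ht, if_neg ht]

lemma valueRaw_step {H m : ℕ} (hm : m < H)
    (π : ℕ → (ℕ → A) → (ℕ → O) → A) (acts : ℕ → A) (obs : ℕ → O) :
    valueRaw μ Ttr Oem Oref rew γ H π m acts obs =
      ∑ o : O, Oref o * valueRaw μ Ttr Oem Oref rew γ H π (m + 1)
        (Function.update acts m (polAct π acts obs m)) (Function.update obs m o) := by
  obtain ⟨k, hk⟩ : ∃ k, H - m = k + 1 := ⟨H - (m + 1), by omega⟩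
  have hk' : H - (m + 1) = k := by omega
  unfold valueRaw
  rw [hk', hk]
  rw [← Fintype.sum_equiv (Fin.consEquiv (fun _ : Fin (k + 1) => O))
    (fun p : O × (Fin k → O) =>
      (∏ j, Oref ((Fin.cons p.1 p.2 : Fin (k + 1) → O) j)) *
        ∑ s : S, riskBelief μ Ttr Oem Oref rew γ H
          (genAct π acts (splice obs m (Fin.cons p.1 p.2 : Fin (k + 1) → O)) m)
          (splice obs m (Fin.cons p.1 p.2 : Fin (k + 1) → O)) s)
    _ (fun p => rfl)]
  rw [Fintype.sum_prod_type]
  refine Finset.sum_congr rfl fun o _ => ?_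
  rw [Finset.mul_sum]
  refine Finset.sum_congr rfl fun tail _ => ?_
  rw [Fin.prod_univ_succ]
  simp only [Fin.cons_zero, Fin.cons_succ]
  rw [splice_cons, mul_assoc]
  congr 2
  have hpa : polAct π acts (splice (Function.update obs m o) (m + 1) tail) m
      = polAct π acts obs m := by
    unfold polAct
    congr 1
    refine truncSeq_congr fun t ht => ?_
    rw [splice_lt _ _ _ (by omega), Function.update_of_ne ht.ne]
  refine Finset.sum_congr rfl fun s _ => ?_
  refine riskBelief_congr μ Ttr Oem Oref rew γ s (fun t ht => ?_) (fun t ht => rfl)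
  rw [genAct_step π acts _ m, hpa]

def Waux [Fintype S] [Fintype O] [Fintype A] [Nonempty S] [Nonempty O] [Nonempty A]
    (μ : S → ℝ) (Ttr : ℕ → A → S → S → ℝ) (Oem : ℕ → O → S → ℝ) (Oref : O → ℝ)
    (rew : ℕ → S → A → ℝ) (γ : ℝ) (H : ℕ) :
    ℕ → ℕ → (ℕ → A) → (ℕ → O) → ℝ
  | 0, _, acts, obs =>
      (1 / γ) * Real.log (∑ s : S, riskBelief μ Ttr Oem Oref rew γ H acts obs s)
  | (k + 1), m, acts, obs =>
      Finset.univ.sup' Finset.univ_nonempty (fun a : A =>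
        (1 / γ) * Real.log (∑ o : O, Oref o *
          Real.exp (γ * Waux μ Ttr Oem Oref rew γ H k (m + 1)
            (Function.update acts m a) (Function.update obs m o))))

def greedyPol [Fintype S] [Fintype O] [Fintype A] [Nonempty S] [Nonempty O] [Nonempty A]
    (μ : S → ℝ) (Ttr : ℕ → A → S → S → ℝ) (Oem : ℕ → O → S → ℝ) (Oref : O → ℝ)
    (rew : ℕ → S → A → ℝ) (γ : ℝ) (H : ℕ) :
    ℕ → (ℕ → A) → (ℕ → O) → A :=
  fun n acts obs =>
    (Finset.exists_mem_eq_sup' Finset.univ_nonempty (fun a : A =>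
      (1 / γ) * Real.log (∑ o : O, Oref o *
        Real.exp (γ * Waux μ Ttr Oem Oref rew γ H (H - (n + 1)) (n + 1)
          (Function.update acts n a) (Function.update obs n o))))).choose

lemma Waux_congr {H : ℕ} : ∀ (k m : ℕ), H ≤ m + k → ∀ {acts acts' : ℕ → A} {obs obs' : ℕ → O},
    (∀ t < m, acts t = acts' t) → (∀ t < m, obs t = obs' t) →
    Waux μ Ttr Oem Oref rew γ H k m acts obs = Waux μ Ttr Oem Oref rew γ H k m acts' obs' := by
  intro k
  induction k with
  | zero =>
    intro m hm acts acts' obs obs' ha ho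
    simp only [Waux]
    congr 2
    exact Finset.sum_congr rfl fun s _ => riskBelief_congr (n := H) μ Ttr Oem Oref rew γ s
      (fun t ht => ha t (lt_of_lt_of_le ht (by omega)))
      (fun t ht => ho t (lt_of_lt_of_le ht (by omega)))
  | succ k ih =>
    intro m hm acts acts' obs obs' ha ho
    simp only [Waux]
    refine Finset.sup'_congr _ rfl fun a _ => ?_
    congr 2
    refine Finset.sum_congr rfl fun o _ => ?_
    congr 3
    refine ih (m + 1) (by omega) (fun t ht => ?_) (fun t ht => ?_)
    · by_cases h : t = m
      · subst h; rw [Function.update_self, Function.update_self]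
      · rw [Function.update_of_ne h, Function.update_of_ne h, ha t (by omega)]
    · by_cases h : t = m
      · subst h; rw [Function.update_self, Function.update_self]
      · rw [Function.update_of_ne h, Function.update_of_ne h, ho t (by omega)]

lemma log_sum_mono {γ : ℝ} (hγ : γ ≠ 0) (c v w : O → ℝ)
    (hc : ∀ o, 0 < c o) (hv : ∀ o, 0 < v o) (hw : ∀ o, 0 < w o)
    (h : ∀ o, (1 / γ) * Real.log (v o) ≤ (1 / γ) * Real.log (w o)) :
    (1 / γ) * Real.log (∑ o, c o * v o) ≤ (1 / γ) * Real.log (∑ o, c o * w o) := by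
  have hsv : 0 < ∑ o, c o * v o :=
    Finset.sum_pos (fun o _ => mul_pos (hc o) (hv o)) Finset.univ_nonempty
  have hsw : 0 < ∑ o, c o * w o :=
    Finset.sum_pos (fun o _ => mul_pos (hc o) (hw o)) Finset.univ_nonempty
  rcases hγ.lt_or_gt with hneg | hpos
  · have h1γ : (1 / γ) < 0 := one_div_neg.mpr hneg
    have h' : ∀ o, w o ≤ v o := fun o => by
      have := (mul_le_mul_left_of_neg h1γ).mp (h o)
      exact (Real.log_le_log_iff (hw o) (hv o)).mp this
    have hsum : ∑ o, c o * w o ≤ ∑ o, c o * v o :=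
      Finset.sum_le_sum fun o _ => mul_le_mul_of_nonneg_left (h' o) (hc o).le
    exact (mul_le_mul_left_of_neg h1γ).mpr
      ((Real.log_le_log_iff hsw hsv).mpr hsum)
  · have h1γ : 0 < (1 / γ) := by positivity
    have h' : ∀ o, v o ≤ w o := fun o => by
      have := (mul_le_mul_iff_right₀ h1γ).mp (h o)
      exact (Real.log_le_log_iff (hv o) (hw o)).mp this
    have hsum : ∑ o, c o * v o ≤ ∑ o, c o * w o :=
      Finset.sum_le_sum fun o _ => mul_le_mul_of_nonneg_left (h' o) (hc o).le
    exact mul_le_mul_of_nonneg_left ((Real.log_le_log_iff hsv hsw).mpr hsum) h1γ.le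

lemma main_opt {H : ℕ} (hγ : γ ≠ 0)
    (hμ0 : ∀ s, 0 ≤ μ s) (hμ1 : ∑ s, μ s = 1)
    (hT0 : ∀ h, h < H → ∀ a s s', 0 ≤ Ttr h a s s')
    (hT1 : ∀ h, h < H → ∀ a s, ∑ s', Ttr h a s s' = 1)
    (hO0 : ∀ t, t < H → ∀ o s, 0 < Oem t o s)
    (hOref0 : ∀ o, 0 < Oref o) :
    ∀ k m, H - m = k → m ≤ H → ∀ (acts : ℕ → A) (obs : ℕ → O),
      ((1 / γ) * Real.log (valueRaw μ Ttr Oem Oref rew γ H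
          (greedyPol μ Ttr Oem Oref rew γ H) m acts obs)
        = Waux μ Ttr Oem Oref rew γ H k m acts obs) ∧
      (∀ π, (1 / γ) * Real.log (valueRaw μ Ttr Oem Oref rew γ H π m acts obs)
        ≤ Waux μ Ttr Oem Oref rew γ H k m acts obs) := by
  have hconv : ∀ (x w : ℝ), 0 < x → (1 / γ) * Real.log x = w → x = Real.exp (γ * w) := by
    intro x w hx h
    have hl : Real.log x = γ * w := by rw [← h]; field_simp
    rw [← hl, Real.exp_log hx]
  intro k
  induction k with
  | zero =>
    intro m hk hm acts obs
    have hmH : m = H := by omega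
    subst hmH
    constructor
    · rw [valueRaw_at_H]; simp only [Waux]
    · intro π; rw [valueRaw_at_H]; simp only [Waux]; exact le_refl _
  | succ k ih =>
    intro m hk hm acts obs
    have hmH : m < H := by omega
    have hk1 : H - (m + 1) = k := by omega
    set g : A → ℝ := fun a =>
      (1 / γ) * Real.log (∑ o : O, Oref o *
        Real.exp (γ * Waux μ Ttr Oem Oref rew γ H k (m + 1)
          (Function.update acts m a) (Function.update obs m o))) with hg
    have hWsup : Waux μ Ttr Oem Oref rew γ H (k + 1) m acts obs
        = Finset.univ.sup' Finset.univ_nonempty g := rfl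
    set f' : A → ℝ := fun a =>
      (1 / γ) * Real.log (∑ o : O, Oref o *
        Real.exp (γ * Waux μ Ttr Oem Oref rew γ H (H - (m + 1)) (m + 1)
          (Function.update (truncSeq acts m) m a)
          (Function.update (truncSeq obs m) m o))) with hf'
    have f'g : ∀ a, f' a = g a := by
      intro a
      simp only [hf', hg, hk1]
      congr 2
      refine Finset.sum_congr rfl fun o _ => ?_
      congr 3
      refine Waux_congr μ Ttr Oem Oref rew γ k (m + 1) (by omega) ?_ ?_
      · intro t ht
        by_cases h : t = m
        · subst h; rw [Function.update_self, Function.update_self]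
        · rw [Function.update_of_ne h, Function.update_of_ne h]
          unfold truncSeq; rw [if_pos (by omega)]
      · intro t ht
        by_cases h : t = m
        · subst h; rw [Function.update_self, Function.update_self]
        · rw [Function.update_of_ne h, Function.update_of_ne h]
          unfold truncSeq; rw [if_pos (by omega)]
    constructor
    · -- greedy achieves the optimum
      have hstep := valueRaw_step μ Ttr Oem Oref rew γ hmH
        (greedyPol μ Ttr Oem Oref rew γ H) acts obs
      set a0 := polAct (greedyPol μ Ttr Oem Oref rew γ H) acts obs m with ha0
      have hspec := (Finset.exists_mem_eq_sup' (Finset.univ_nonempty (α := A)) f').choose_spec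
      have ha0eq : a0 = (Finset.exists_mem_eq_sup' (Finset.univ_nonempty (α := A)) f').choose := rfl
      have hexp : ∀ o : O, valueRaw μ Ttr Oem Oref rew γ H (greedyPol μ Ttr Oem Oref rew γ H)
          (m + 1) (Function.update acts m a0) (Function.update obs m o)
          = Real.exp (γ * Waux μ Ttr Oem Oref rew γ H k (m + 1)
            (Function.update acts m a0) (Function.update obs m o)) := by
        intro o
        exact hconv _ _ (valueRaw_pos μ Ttr Oem Oref rew γ hμ0 hμ1 hT0 hT1 hO0 hOref0 _ _ _ _)
          ((ih (m + 1) hk1 (by omega) _ _).1)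
      rw [hstep]
      rw [Finset.sum_congr rfl fun o _ => by rw [hexp o]]
      have hga0 : (1 / γ) * Real.log (∑ o : O, Oref o *
          Real.exp (γ * Waux μ Ttr Oem Oref rew γ H k (m + 1)
            (Function.update acts m a0) (Function.update obs m o))) = g a0 := rfl
      rw [hga0, hWsup]
      rw [Finset.sup'_congr Finset.univ_nonempty rfl (fun a _ => (f'g a).symm)]
      rw [hspec.2, ← ha0eq, f'g]
    · intro π
      rw [valueRaw_step μ Ttr Oem Oref rew γ hmH π acts obs]
      set a1 := polAct π acts obs m with ha1
      have hmono := log_sum_mono (O := O) hγ Oref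
        (fun o => valueRaw μ Ttr Oem Oref rew γ H π (m + 1)
          (Function.update acts m a1) (Function.update obs m o))
        (fun o => Real.exp (γ * Waux μ Ttr Oem Oref rew γ H k (m + 1)
          (Function.update acts m a1) (Function.update obs m o)))
        hOref0
        (fun o => valueRaw_pos μ Ttr Oem Oref rew γ hμ0 hμ1 hT0 hT1 hO0 hOref0 _ _ _ _)
        (fun o => Real.exp_pos _)
        (fun o => by
          rw [Real.log_exp]
          have h1 : (1 / γ) * (γ * Waux μ Ttr Oem Oref rew γ H k (m + 1)
              (Function.update acts m a1) (Function.update obs m o))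
              = Waux μ Ttr Oem Oref rew γ H k (m + 1)
              (Function.update acts m a1) (Function.update obs m o) := by
            field_simp
          rw [h1]
          exact (ih (m + 1) hk1 (by omega) _ _).2 π)
      refine le_trans hmono ?_
      rw [hWsup]
      exact Finset.le_sup' g (Finset.mem_univ a1)

end Aux

/-- Bellman optimality equations: the optimal value `V*_h(f_h) = max_π V^π_h(f_h)`
(a maximum over deterministic policies, which exists) satisfies
`V*_{H+1}(f_{H+1}) = (1/γ)·ln ∑_s σ_{H+1}(s; f_{H+1})` and, for `h ∈ {1,…,H}`,
`V*_h(f_h) = max_{a∈A} (1/γ)·ln ∑_o O'(o)·exp(γ·V*_{h+1}(f_h,a,o))`; in particular a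
greedy deterministic history-dependent policy attains the globally optimal value
(paper step `h` is index `m = h - 1`). -/
theorem bellman_optimality_equations
    [Fintype S] [Fintype O] [Fintype A] [Nonempty S] [Nonempty O] [Nonempty A]
    (H : ℕ) (hH : 1 ≤ H) (γ : ℝ) (hγ : γ ≠ 0)
    (μ : S → ℝ) (Ttr : ℕ → A → S → S → ℝ) (Oem : ℕ → O → S → ℝ) (Oref : O → ℝ)
    (rew : ℕ → S → A → ℝ)
    (hμ0 : ∀ s, 0 ≤ μ s) (hμ1 : ∑ s, μ s = 1)
    (hT0 : ∀ h, h < H → ∀ a s s', 0 ≤ Ttr h a s s')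
    (hT1 : ∀ h, h < H → ∀ a s, ∑ s', Ttr h a s s' = 1)
    (hO0 : ∀ t, t < H → ∀ o s, 0 < Oem t o s)
    (hO1 : ∀ t, t < H → ∀ s, ∑ o, Oem t o s = 1)
    (hOref0 : ∀ o, 0 < Oref o) (hOref1 : ∑ o, Oref o = 1)
    (hr : ∀ h, h < H → ∀ s a, rew h s a ∈ Set.Icc (0 : ℝ) 1) :
    (∀ m, m ≤ H → ∀ (acts : ℕ → A) (obs : ℕ → O),
      ∃ x, IsGreatest {x : ℝ | ∃ π : ℕ → (ℕ → A) → (ℕ → O) → A,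
        x = (1 / γ) * Real.log (valueRaw μ Ttr Oem Oref rew γ H π m acts obs)} x) ∧
    (∀ Vstar : ℕ → (ℕ → A) → (ℕ → O) → ℝ,
      (∀ m, m ≤ H → ∀ (acts : ℕ → A) (obs : ℕ → O),
        IsGreatest {x : ℝ | ∃ π : ℕ → (ℕ → A) → (ℕ → O) → A,
          x = (1 / γ) * Real.log (valueRaw μ Ttr Oem Oref rew γ H π m acts obs)}
          (Vstar m acts obs)) →
      (∀ (acts : ℕ → A) (obs : ℕ → O),
        Vstar H acts obs =
          (1 / γ) * Real.log (∑ s : S, riskBelief μ Ttr Oem Oref rew γ H acts obs s)) ∧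
      (∀ m, m < H → ∀ (acts : ℕ → A) (obs : ℕ → O),
        Vstar m acts obs =
          Finset.univ.sup' Finset.univ_nonempty (fun a : A =>
            (1 / γ) * Real.log (∑ o : O, Oref o *
              Real.exp (γ * Vstar (m + 1) (Function.update acts m a)
                (Function.update obs m o)))))) := by
  have key : ∀ m, m ≤ H → ∀ (acts : ℕ → A) (obs : ℕ → O),
      IsGreatest {x : ℝ | ∃ π : ℕ → (ℕ → A) → (ℕ → O) → A,
        x = (1 / γ) * Real.log (valueRaw μ Ttr Oem Oref rew γ H π m acts obs)}
        (Waux μ Ttr Oem Oref rew γ H (H - m) m acts obs) := by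
    intro m hm acts obs
    obtain ⟨hmem, hub⟩ := main_opt μ Ttr Oem Oref rew γ hγ hμ0 hμ1 hT0 hT1 hO0 hOref0
      (H - m) m rfl hm acts obs
    constructor
    · exact ⟨greedyPol μ Ttr Oem Oref rew γ H, hmem.symm⟩
    · rintro x ⟨π, rfl⟩
      exact hub π
  refine ⟨fun m hm acts obs => ⟨_, key m hm acts obs⟩, ?_⟩
  intro Vstar hV
  have hVeq : ∀ m, m ≤ H → ∀ (acts : ℕ → A) (obs : ℕ → O),
      Vstar m acts obs = Waux μ Ttr Oem Oref rew γ H (H - m) m acts obs :=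
    fun m hm acts obs => (hV m hm acts obs).unique (key m hm acts obs)
  constructor
  · intro acts obs
    rw [hVeq H le_rfl acts obs, Nat.sub_self]
    simp only [Waux]
  · intro m hm acts obs
    rw [hVeq m hm.le acts obs]
    have hk : H - m = (H - (m + 1)) + 1 := by omega
    rw [hk]
    simp only [Waux]
    refine Finset.sup'_congr _ rfl fun a _ => ?_
    congr 2
    refine Finset.sum_congr rfl fun o _ => ?_
    congr 3
    exact (hVeq (m + 1) hm (Function.update acts m a) (Function.update obs m o)).symm

end
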